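/- For D = 3: there exist constants c > 0 and C ≥ 0 such that for every u ∈ ℝ³ with |u| ≥ 1 and every K > 0 fixed, ∫_{|k| ≤ K} (sin²(k·u)/|k|⁴) dk ≥ c|u| - C, where the integral is over the ball of radius K in ℝ³. -/

import Mathlib

open MeasureTheory
open scoped RealInnerProductSpace ENNReal NNReal Pointwise

open Set Metric in
private lemma aux_meas3 (v : EuclideanSpace ℝ (Fin 3)) :
    Measurable fun x : EuclideanSpace ℝ (Fin 3) => Real.sin ⟪x, v⟫ ^ 2 / ‖x‖ ^ 4 := by
  have h1 : Continuous fun x : EuclideanSpace ℝ (Fin 3) => ⟪x, v⟫ :=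
    continuous_id.inner continuous_const
  have h2 : Measurable fun x : EuclideanSpace ℝ (Fin 3) => Real.sin ⟪x, v⟫ ^ 2 :=
    ((Real.continuous_sin.comp h1).pow 2).measurable
  exact h2.div ((continuous_norm.pow 4).measurable)

open Set Metric in
private lemma aux_bound3 (v : EuclideanSpace ℝ (Fin 3)) (hv : ‖v‖ = 1)
    (x : EuclideanSpace ℝ (Fin 3)) :
    Real.sin ⟪x, v⟫ ^ 2 / ‖x‖ ^ 4 ≤ (‖x‖ ^ 2)⁻¹ := by
  rcases eq_or_ne x 0 with rfl | hx
  · simp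
  · have hxn : (0:ℝ) < ‖x‖ := norm_pos_iff.2 hx
    have h1 : Real.sin ⟪x, v⟫ ^ 2 ≤ ⟪x, v⟫ ^ 2 := Real.sin_sq_le_sq
    have h2 : ⟪x, v⟫ ^ 2 ≤ ‖x‖ ^ 2 := by
      have h := abs_real_inner_le_norm x v
      rw [hv, mul_one] at h
      calc ⟪x, v⟫ ^ 2 = |⟪x, v⟫| ^ 2 := (sq_abs _).symm
        _ ≤ ‖x‖ ^ 2 := pow_le_pow_left₀ (abs_nonneg _) h 2
    have h3 : Real.sin ⟪x, v⟫ ^ 2 / ‖x‖ ^ 4 ≤ ‖x‖ ^ 2 / ‖x‖ ^ 4 :=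
      (div_le_div_iff_of_pos_right (by positivity)).mpr (h1.trans h2)
    refine h3.trans_eq ?_
    field_simp

open Set Metric in
private lemma aux_int3 (R : ℝ) (hR : 0 < R) :
    IntegrableOn (fun x : EuclideanSpace ℝ (Fin 3) => (‖x‖ ^ 2)⁻¹) (closedBall 0 R) := by
  set μ := (volume : Measure (EuclideanSpace ℝ (Fin 3))).restrict (closedBall 0 R) with hμ
  have hmeas : Measurable fun x : EuclideanSpace ℝ (Fin 3) => (‖x‖ ^ 2)⁻¹ :=
    ((continuous_norm.pow 2).measurable).inv
  refine ⟨hmeas.aestronglyMeasurable, ?_⟩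
  have hnn : (0:(EuclideanSpace ℝ (Fin 3)) → ℝ) ≤ᵐ[μ] fun x => (‖x‖ ^ 2)⁻¹ :=
    Filter.Eventually.of_forall fun x => by positivity
  rw [hasFiniteIntegral_iff_ofReal hnn]
  rw [lintegral_eq_lintegral_meas_le μ hnn hmeas.aemeasurable]
  have hμfin : μ Set.univ < ⊤ := by
    rw [hμ, Measure.restrict_apply MeasurableSet.univ, Set.univ_inter]
    exact measure_closedBall_lt_top
  have key : ∀ t : ℝ, 0 < t →
      μ {a : EuclideanSpace ℝ (Fin 3) | t ≤ (‖a‖ ^ 2)⁻¹}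
        ≤ volume (closedBall (0 : EuclideanSpace ℝ (Fin 3)) (Real.sqrt t⁻¹)) := by
    intro t ht
    refine le_trans (le_trans (measure_mono ?_)
      (Measure.restrict_le_self _)) le_rfl
    intro a ha
    simp only [Set.mem_setOf_eq] at ha
    rcases eq_or_ne a 0 with rfl | ha0
    · simp at ha; linarith
    · have hna : (0:ℝ) < ‖a‖ := norm_pos_iff.2 ha0
      have h2 : ‖a‖ ^ 2 ≤ t⁻¹ := by
        have h3 : (0:ℝ) < ‖a‖ ^ 2 := by positivity
        rw [le_inv_comm₀ ht h3] at ha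
        exact ha
      rw [mem_closedBall_zero_iff]
      have := Real.sqrt_le_sqrt h2
      rwa [Real.sqrt_sq hna.le] at this
  calc ∫⁻ t in Set.Ioi (0:ℝ), μ {a | t ≤ (‖a‖ ^ 2)⁻¹}
      ≤ ∫⁻ t in Set.Ioc (0:ℝ) 1 ∪ Set.Ioi 1, μ {a | t ≤ (‖a‖ ^ 2)⁻¹} :=
        lintegral_mono_set Set.Ioi_subset_Ioc_union_Ioi
    _ ≤ (∫⁻ t in Set.Ioc (0:ℝ) 1, μ {a | t ≤ (‖a‖ ^ 2)⁻¹})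
        + ∫⁻ t in Set.Ioi (1:ℝ), μ {a | t ≤ (‖a‖ ^ 2)⁻¹} := lintegral_union_le _ _ _
    _ < ⊤ := by
        refine ENNReal.add_lt_top.2 ⟨?_, ?_⟩
        · calc ∫⁻ t in Set.Ioc (0:ℝ) 1, μ {a | t ≤ (‖a‖ ^ 2)⁻¹}
              ≤ ∫⁻ _ in Set.Ioc (0:ℝ) 1, μ Set.univ :=
                lintegral_mono fun t => measure_mono (Set.subset_univ _)
            _ = μ Set.univ * volume (Set.Ioc (0:ℝ) 1) := by
                rw [setLIntegral_const]
            _ < ⊤ := by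
                refine ENNReal.mul_lt_top hμfin ?_
                simp [Real.volume_Ioc]
        · have hb : ∀ t ∈ Set.Ioi (1:ℝ), μ {a | t ≤ (‖a‖ ^ 2)⁻¹}
              ≤ ENNReal.ofReal (t ^ (-(3:ℝ)/2)) *
                volume (ball (0 : EuclideanSpace ℝ (Fin 3)) 1) := by
            intro t ht
            have ht0 : (0:ℝ) < t := lt_trans one_pos ht
            refine (key t ht0).trans ?_
            rw [Measure.addHaar_closedBall _ _ (Real.sqrt_nonneg _)]
            have hrw : Real.sqrt t⁻¹ ^ Module.finrank ℝ (EuclideanSpace ℝ (Fin 3))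
                = t ^ (-(3:ℝ)/2) := by
              rw [finrank_euclideanSpace_fin]
              rw [Real.sqrt_eq_rpow, ← Real.rpow_natCast (t⁻¹ ^ ((1:ℝ)/2)) 3,
                ← Real.rpow_mul (by positivity), ← Real.rpow_neg_one t,
                ← Real.rpow_mul ht0.le]
              norm_num
            rw [hrw]
          calc ∫⁻ t in Set.Ioi (1:ℝ), μ {a | t ≤ (‖a‖ ^ 2)⁻¹}
              ≤ ∫⁻ t in Set.Ioi (1:ℝ), ENNReal.ofReal (t ^ (-(3:ℝ)/2)) *
                  volume (ball (0 : EuclideanSpace ℝ (Fin 3)) 1) :=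
                setLIntegral_mono' measurableSet_Ioi hb
            _ = (∫⁻ t in Set.Ioi (1:ℝ), ENNReal.ofReal (t ^ (-(3:ℝ)/2))) *
                  volume (ball (0 : EuclideanSpace ℝ (Fin 3)) 1) := by
                rw [lintegral_mul_const' _ _ measure_ball_lt_top.ne]
            _ < ⊤ := by
                refine ENNReal.mul_lt_top ?_ measure_ball_lt_top
                refine IntegrableOn.setLIntegral_lt_top ?_
                exact integrableOn_Ioi_rpow_of_lt (by norm_num) one_pos

open Set Metric in
private lemma aux_intg3 (v : EuclideanSpace ℝ (Fin 3)) (hv : ‖v‖ = 1) (R : ℝ) (hR : 0 < R) :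
    IntegrableOn (fun x : EuclideanSpace ℝ (Fin 3) => Real.sin ⟪x, v⟫ ^ 2 / ‖x‖ ^ 4)
      (closedBall 0 R) := by
  refine Integrable.mono' (aux_int3 R hR) (aux_meas3 v).aestronglyMeasurable ?_
  refine Filter.Eventually.of_forall fun x => ?_
  rw [Real.norm_eq_abs, abs_of_nonneg (by positivity)]
  exact aux_bound3 v hv x

open Set Metric in
private lemma aux_rot3 (v : EuclideanSpace ℝ (Fin 3)) (hv : ‖v‖ = 1) (R : ℝ) :
    ∫ x in closedBall (0 : EuclideanSpace ℝ (Fin 3)) R, Real.sin ⟪x, v⟫ ^ 2 / ‖x‖ ^ 4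
      = ∫ x in closedBall (0 : EuclideanSpace ℝ (Fin 3)) R,
          Real.sin ⟪x, EuclideanSpace.single (0 : Fin 3) (1:ℝ)⟫ ^ 2 / ‖x‖ ^ 4 := by
  set e : EuclideanSpace ℝ (Fin 3) := EuclideanSpace.single (0 : Fin 3) (1:ℝ) with he
  have hne : ‖e‖ = 1 := by
    rw [he, EuclideanSpace.norm_single, norm_one]
  have hnorm : ‖e‖ = ‖v‖ := by rw [hne, hv]
  set T : EuclideanSpace ℝ (Fin 3) ≃ₗᵢ[ℝ] EuclideanSpace ℝ (Fin 3) :=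
    Submodule.reflection (ℝ ∙ (e - v))ᗮ with hT
  have hTe : T e = v := Submodule.reflection_sub hnorm
  have hTmp : MeasurePreserving T := T.measurePreserving
  have hTemb : MeasurableEmbedding T := T.toHomeomorph.measurableEmbedding
  have hpre : (T : EuclideanSpace ℝ (Fin 3) → EuclideanSpace ℝ (Fin 3)) ⁻¹'
      (closedBall 0 R) = closedBall 0 R := by
    ext x
    simp only [Set.mem_preimage, mem_closedBall_zero_iff]
    rw [T.norm_map]
  have := hTmp.setIntegral_preimage_emb hTemb
    (fun x => Real.sin ⟪x, v⟫ ^ 2 / ‖x‖ ^ 4) (closedBall 0 R)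
  rw [hpre] at this
  rw [← this]
  refine setIntegral_congr_fun measurableSet_closedBall fun x _ => ?_
  rw [← hTe, T.inner_map_map, T.norm_map]

theorem integral_sin_sq_div_norm_pow_four_lower_bound_dim3 (K : ℝ) (hK : 0 < K) :
    ∃ c C : ℝ, 0 < c ∧ 0 ≤ C ∧
      ∀ u : EuclideanSpace ℝ (Fin 3), 1 ≤ ‖u‖ →
        c * ‖u‖ - C ≤
          ∫ k in Metric.closedBall (0 : EuclideanSpace ℝ (Fin 3)) K,
            (Real.sin ⟪k, u⟫) ^ 2 / ‖k‖ ^ 4 := by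
  classical
  set E := EuclideanSpace ℝ (Fin 3)
  set e : E := EuclideanSpace.single (0 : Fin 3) (1:ℝ) with he
  have hne : ‖e‖ = 1 := by rw [he, EuclideanSpace.norm_single, norm_one]
  set c : ℝ := ∫ x in Metric.closedBall (0 : E) K, Real.sin ⟪x, e⟫ ^ 2 / ‖x‖ ^ 4 with hc
  have hcpos : 0 < c := by
    rw [hc]
    have hnn : 0 ≤ᵐ[(volume : Measure E).restrict (Metric.closedBall 0 K)]
        fun x : E => Real.sin ⟪x, e⟫ ^ 2 / ‖x‖ ^ 4 :=
      Filter.Eventually.of_forall fun x => by positivity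
    rw [setIntegral_pos_iff_support_of_nonneg_ae hnn (aux_intg3 e hne K hK)]
    -- the open set where the integrand is positive
    set δ : ℝ := min Real.pi K / 2 with hδ
    have hδpos : 0 < δ := by
      have := Real.pi_pos
      have : 0 < min Real.pi K := lt_min Real.pi_pos hK
      positivity
    have hδlt : δ < min Real.pi K := by
      have : 0 < min Real.pi K := lt_min Real.pi_pos hK
      rw [hδ]; linarith
    set U : Set E := ((fun x : E => ⟪x, e⟫) ⁻¹' Set.Ioo 0 (min Real.pi K))
        ∩ Metric.ball 0 K with hU
    have hUopen : IsOpen U := by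
      refine IsOpen.inter ?_ Metric.isOpen_ball
      exact (isOpen_Ioo).preimage (continuous_id.inner continuous_const)
    have hUne : U.Nonempty := by
      refine ⟨δ • e, ?_, ?_⟩
      · simp only [Set.mem_preimage, real_inner_smul_left]
        rw [real_inner_self_eq_norm_sq, hne]
        simp only [one_pow, mul_one]
        exact Set.mem_Ioo.2 ⟨hδpos, hδlt⟩
      · rw [mem_ball_zero_iff, norm_smul, hne, mul_one, Real.norm_eq_abs,
          abs_of_pos hδpos]
        exact hδlt.trans_le (min_le_right _ _)
    have hUsub : U ⊆ Function.support (fun x : E => Real.sin ⟪x, e⟫ ^ 2 / ‖x‖ ^ 4)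
        ∩ Metric.closedBall 0 K := by
      rintro x ⟨hx1, hx2⟩
      simp only [Set.mem_preimage, Set.mem_Ioo] at hx1
      have hxpos : 0 < ⟪x, e⟫ := hx1.1
      have hxlt : ⟪x, e⟫ < Real.pi := hx1.2.trans_le (min_le_left _ _)
      have hsin : 0 < Real.sin ⟪x, e⟫ := Real.sin_pos_of_pos_of_lt_pi hxpos hxlt
      have hx0 : x ≠ 0 := by
        rintro rfl
        simp at hxpos
      have hxn : (0:ℝ) < ‖x‖ := norm_pos_iff.2 hx0
      constructor
      · simp only [Function.mem_support]
        positivity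
      · exact Metric.ball_subset_closedBall hx2
    calc (0:ℝ≥0∞) < volume U := hUopen.measure_pos _ hUne
      _ ≤ _ := measure_mono hUsub
  refine ⟨c, 0, hcpos, le_refl 0, fun u hu => ?_⟩
  rw [sub_zero]
  set r : ℝ := ‖u‖ with hr
  have hr1 : (1:ℝ) ≤ r := hu
  have hrpos : (0:ℝ) < r := lt_of_lt_of_le one_pos hr1
  have hrne : r ≠ 0 := hrpos.ne'
  set v : E := r⁻¹ • u with hv
  have hnv : ‖v‖ = 1 := by
    rw [hv, norm_smul, Real.norm_eq_abs, abs_of_pos (inv_pos.2 hrpos), ← hr,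
      inv_mul_cancel₀ hrne]
  -- scaling step
  have hscale : ∫ k in Metric.closedBall (0 : E) K, Real.sin ⟪k, u⟫ ^ 2 / ‖k‖ ^ 4
      = r * ∫ x in Metric.closedBall (0 : E) (K * r), Real.sin ⟪x, v⟫ ^ 2 / ‖x‖ ^ 4 := by
    have hcomp := Measure.setIntegral_comp_smul_of_pos (volume : Measure E)
      (fun k : E => Real.sin ⟪k, u⟫ ^ 2 / ‖k‖ ^ 4)
      (Metric.closedBall (0 : E) (K * r)) (inv_pos.2 hrpos)
    have hset : r⁻¹ • Metric.closedBall (0 : E) (K * r) = Metric.closedBall (0 : E) K := by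
      rw [smul_closedBall _ _ (by positivity : (0:ℝ) ≤ K * r), smul_zero,
        Real.norm_eq_abs, abs_of_pos (inv_pos.2 hrpos)]
      congr 1
      field_simp
    rw [hset] at hcomp
    have hfun : ∀ x : E, Real.sin ⟪r⁻¹ • x, u⟫ ^ 2 / ‖r⁻¹ • x‖ ^ 4
        = r ^ 4 * (Real.sin ⟪x, v⟫ ^ 2 / ‖x‖ ^ 4) := by
      intro x
      have h1 : ⟪r⁻¹ • x, u⟫ = ⟪x, v⟫ := by
        rw [hv, real_inner_smul_left, real_inner_smul_right]
      rw [h1, norm_smul, Real.norm_eq_abs, abs_of_pos (inv_pos.2 hrpos), mul_pow]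
      rcases eq_or_ne x 0 with rfl | hx0
      · simp
      · have hxn : (0:ℝ) < ‖x‖ := norm_pos_iff.2 hx0
        field_simp
    have hfinrank : Module.finrank ℝ E = 3 := finrank_euclideanSpace_fin
    rw [hfinrank] at hcomp
    simp only [hfun] at hcomp
    rw [integral_const_mul] at hcomp
    have h3 : ((r⁻¹ : ℝ) ^ 3)⁻¹ = r ^ 3 := by field_simp
    rw [h3, smul_eq_mul] at hcomp
    -- hcomp : r ^ 4 * ∫ g = r ^ 3 * ∫ f
    refine mul_left_cancel₀ (pow_ne_zero 3 hrne) ?_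
    rw [← hcomp]
    ring
  rw [hscale]
  -- monotonicity step
  have hKr : K ≤ K * r := by nlinarith
  have hmono : (∫ x in Metric.closedBall (0 : E) K, Real.sin ⟪x, v⟫ ^ 2 / ‖x‖ ^ 4)
      ≤ ∫ x in Metric.closedBall (0 : E) (K * r), Real.sin ⟪x, v⟫ ^ 2 / ‖x‖ ^ 4 := by
    refine setIntegral_mono_set (aux_intg3 v hnv (K * r) (by positivity)) ?_ ?_
    · exact Filter.Eventually.of_forall fun x => by positivity
    · exact HasSubset.Subset.eventuallyLE (Metric.closedBall_subset_closedBall hKr)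
  have hrot : (∫ x in Metric.closedBall (0 : E) K, Real.sin ⟪x, v⟫ ^ 2 / ‖x‖ ^ 4)
      = c := by
    rw [hc]
    exact aux_rot3 v hnv K
  have : c ≤ ∫ x in Metric.closedBall (0 : E) (K * r), Real.sin ⟪x, v⟫ ^ 2 / ‖x‖ ^ 4 := by
    rw [← hrot]; exact hmono
  calc c * r ≤ (∫ x in Metric.closedBall (0 : E) (K * r),
        Real.sin ⟪x, v⟫ ^ 2 / ‖x‖ ^ 4) * r := by
        exact mul_le_mul_of_nonneg_right this hrpos.le
    _ = r * ∫ x in Metric.closedBall (0 : E) (K * r), Real.sin ⟪x, v⟫ ^ 2 / ‖x‖ ^ 4 := by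
        ring
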